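/- Let $p \geq 2$ and $\alpha_j^p = \frac{(-1)^{j+1} p (p+j)!}{(p-j-1)!(2j+2)!}$ for $1 \leq j \leq p-1$. Then for all $\kappa \in (0, 4p^2]$, we have $\left|\frac{2}{p^2} \sum_{j=1}^{p-1} \alpha_j^p \left(\frac{\kappa}{p^2}\right)^{j-1}\right| \leq \frac{p^2 - 1}{12}$. -/

import Mathlib

/-- Coefficients of the local time-stepping scheme in closed form. -/
noncomputable def alphaLTS (p j : ℕ) : ℝ :=
  (-1 : ℝ) ^ (j + 1) * (p : ℝ) * (Nat.factorial (p + j)) /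
    ((Nat.factorial (p - j - 1)) * (Nat.factorial (2 * j + 2)))
open Real Finset

lemma sin_nat_mul_le (n : ℕ) (x : ℝ) : |Real.sin (n * x)| ≤ n * |Real.sin x| := by
  induction n with
  | zero => simp
  | succ n ih =>
    have h : ((n : ℝ) + 1) * x = n * x + x := by ring
    push_cast
    rw [h, Real.sin_add]
    calc |Real.sin (n*x) * Real.cos x + Real.cos (n*x) * Real.sin x|
        ≤ |Real.sin (n*x) * Real.cos x| + |Real.cos (n*x) * Real.sin x| := abs_add_le _ _
      _ ≤ |Real.sin (n*x)| * 1 + 1 * |Real.sin x| := by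
          rw [abs_mul, abs_mul]
          gcongr
          · exact Real.abs_cos_le_one x
          · exact Real.abs_cos_le_one _
      _ ≤ (n : ℝ) * |Real.sin x| + 1 * |Real.sin x| := by
          rw [mul_one]
          gcongr
      _ = ((n : ℝ) + 1) * |Real.sin x| := by ring

lemma sin_int_sq_le (q : ℤ) (x : ℝ) : Real.sin (q * x) ^ 2 ≤ (q : ℝ) ^ 2 * Real.sin x ^ 2 := by
  have hcast : ((q.natAbs : ℝ)) = |(q : ℝ)| := by
    rw [Nat.cast_natAbs]; exact Int.cast_abs
  have hs : Real.sin ((q : ℝ) * x) ^ 2 = Real.sin ((q.natAbs : ℝ) * x) ^ 2 := by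
    rw [hcast]
    rcases abs_choice (q : ℝ) with h | h
    · rw [h]
    · rw [h, neg_mul, Real.sin_neg, neg_sq]
  have h := sin_nat_mul_le q.natAbs x
  have h2 : Real.sin ((q.natAbs : ℝ) * x) ^ 2 ≤ ((q.natAbs : ℝ)) ^ 2 * Real.sin x ^ 2 := by
    calc Real.sin ((q.natAbs:ℝ) * x) ^ 2 = |Real.sin ((q.natAbs:ℝ)*x)| ^ 2 := (sq_abs _).symm
      _ ≤ ((q.natAbs:ℝ) * |Real.sin x|) ^ 2 := by
          apply pow_le_pow_left₀ (abs_nonneg _) h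
      _ = (q.natAbs:ℝ)^2 * Real.sin x ^ 2 := by rw [mul_pow, sq_abs]
  rw [hs, ← sq_abs (q:ℝ), ← hcast]
  exact h2

lemma sin_telescope (p : ℕ) (u : ℝ) :
    Real.sin (p * u) = Real.sin u * ∑ m ∈ range p, Real.cos (((p : ℝ) - 1 - 2 * m) * u) := by
  set f : ℕ → ℝ := fun m => Real.sin (((p:ℝ) - 2 * m) * u) with hf
  have key : ∀ m : ℕ, 2 * (Real.sin u * Real.cos (((p:ℝ) - 1 - 2 * m) * u))
      = f m - f (m + 1) := by
    intro m
    simp only [hf]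
    have e1 : ((p:ℝ) - 2 * m) * u = u + ((p:ℝ) - 1 - 2 * m) * u := by ring
    have e2 : ((p:ℝ) - 2 * ((m : ℕ) + 1 : ℕ)) * u = -(u - ((p:ℝ) - 1 - 2 * m) * u) := by
      push_cast; ring
    rw [e1, e2, Real.sin_add, Real.sin_neg, Real.sin_sub]; ring
  have h2 : 2 * (Real.sin u * ∑ m ∈ range p, Real.cos (((p:ℝ) - 1 - 2 * m) * u))
      = 2 * Real.sin (p * u) := by
    rw [Finset.mul_sum, Finset.mul_sum]
    rw [Finset.sum_congr rfl (fun m _ => key m)]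
    rw [Finset.sum_range_sub' f p]
    have e0 : f 0 = Real.sin (p * u) := by simp only [hf]; norm_num
    have ep : f p = -Real.sin (p * u) := by
      simp only [hf]
      have : ((p:ℝ) - 2 * p) * u = -((p:ℝ) * u) := by ring
      rw [this, Real.sin_neg]
    rw [e0, ep]; ring
  linarith

lemma sum_range_cast (p : ℕ) : ∑ m ∈ range p, (m : ℝ) = p * (p - 1) / 2 := by
  induction p with
  | zero => simp
  | succ n ih => rw [Finset.sum_range_succ, ih]; push_cast; ring

lemma sum_range_sq_cast (p : ℕ) : ∑ m ∈ range p, (m : ℝ)^2 = p * (p - 1) * (2*p - 1) / 6 := by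
  induction p with
  | zero => simp
  | succ n ih => rw [Finset.sum_range_succ, ih]; push_cast; ring

lemma Tsum (p : ℕ) :
    ∑ m ∈ range p, ∑ n ∈ range p, (((p:ℝ) - 1 - m - n)^2 + ((n:ℝ) - m)^2)
      = (p:ℝ)^2 * ((p:ℝ)^2 - 1) / 3 := by
  have h1 := sum_range_cast p
  have h2 := sum_range_sq_cast p
  have inner : ∀ m : ℕ, ∑ n ∈ range p, (((p:ℝ) - 1 - m - n)^2 + ((n:ℝ) - m)^2)
      = (p:ℝ) * (((p:ℝ) - 1 - m)^2 + (m:ℝ)^2)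
        - (2 * ((p:ℝ) - 1)) * ((p:ℝ) * (p - 1) / 2) + 2 * ((p:ℝ) * (p-1) * (2*p-1) / 6) := by
    intro m
    have e : ∀ n : ℕ, (((p:ℝ) - 1 - m - n)^2 + ((n:ℝ) - m)^2)
        = (((p:ℝ) - 1 - m)^2 + (m:ℝ)^2) - (2 * ((p:ℝ) - 1)) * n + 2 * (n:ℝ)^2 := by
      intro n; ring
    rw [Finset.sum_congr rfl (fun n _ => e n)]
    rw [Finset.sum_add_distrib, Finset.sum_sub_distrib, Finset.sum_const, ← Finset.mul_sum,
      ← Finset.mul_sum, h1, h2, Finset.card_range]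
    push_cast; ring
  rw [Finset.sum_congr rfl (fun m _ => inner m)]
  have e2 : ∀ m : ℕ, (p:ℝ) * (((p:ℝ) - 1 - m)^2 + (m:ℝ)^2)
        - (2 * ((p:ℝ) - 1)) * ((p:ℝ) * (p - 1) / 2) + 2 * ((p:ℝ) * (p-1) * (2*p-1) / 6)
      = ((p:ℝ) * ((p:ℝ)-1)^2 - (2 * ((p:ℝ) - 1)) * ((p:ℝ) * (p - 1) / 2)
          + 2 * ((p:ℝ) * (p-1) * (2*p-1) / 6)) - (2 * (p:ℝ) * ((p:ℝ)-1)) * m + (2*(p:ℝ)) * (m:ℝ)^2 := by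
    intro m; ring
  rw [Finset.sum_congr rfl (fun m _ => e2 m)]
  rw [Finset.sum_add_distrib, Finset.sum_sub_distrib, Finset.sum_const, ← Finset.mul_sum,
    ← Finset.mul_sum, h1, h2, Finset.card_range]
  push_cast; ring

lemma cos_prod_identity (r s u : ℝ) :
    1 - Real.cos ((r + s) * u) * Real.cos ((r - s) * u)
      = Real.sin (r * u) ^ 2 + Real.sin (s * u) ^ 2 := by
  have e1 : (r + s) * u = r * u + s * u := by ring
  have e2 : (r - s) * u = r * u - s * u := by ring
  rw [e1, e2, Real.cos_add, Real.cos_sub]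
  have hr := Real.sin_sq_add_cos_sq (r * u)
  have hs := Real.sin_sq_add_cos_sq (s * u)
  nlinarith [hr, hs]

lemma abs_cos_sum_le (p : ℕ) (u : ℝ) :
    |∑ m ∈ range p, Real.cos (((p:ℝ) - 1 - 2 * m) * u)| ≤ (p : ℝ) := by
  calc |∑ m ∈ range p, Real.cos (((p:ℝ) - 1 - 2 * m) * u)|
      ≤ ∑ m ∈ range p, |Real.cos (((p:ℝ) - 1 - 2 * m) * u)| := Finset.abs_sum_le_sum_abs _ _
    _ ≤ ∑ m ∈ range p, (1:ℝ) := Finset.sum_le_sum (fun m _ => Real.abs_cos_le_one _)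
    _ = (p : ℝ) := by simp

lemma key_sin_bound (p : ℕ) (u : ℝ) :
    0 ≤ (p:ℝ)^2 * Real.sin u ^ 2 - Real.sin (p * u) ^ 2 ∧
    (p:ℝ)^2 * Real.sin u ^ 2 - Real.sin (p * u) ^ 2
      ≤ (p:ℝ)^2 * ((p:ℝ)^2 - 1) / 3 * Real.sin u ^ 4 := by
  have hS := sin_telescope p u
  set S := ∑ m ∈ range p, Real.cos (((p:ℝ) - 1 - 2 * m) * u) with hSdef
  have hSabs := abs_cos_sum_le p u
  rw [← hSdef] at hSabs
  have hS2 : S ^ 2 ≤ (p:ℝ)^2 := by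
    have := sq_abs S
    nlinarith [abs_nonneg S, Nat.cast_nonneg (α := ℝ) p]
  have hdiff : (p:ℝ)^2 - S^2 ≤ (p:ℝ)^2 * ((p:ℝ)^2 - 1) / 3 * Real.sin u ^ 2 := by
    have hp2 : (p:ℝ)^2 = ∑ m ∈ range p, ∑ n ∈ range p, (1:ℝ) := by
      simp [Finset.sum_const, Finset.card_range]; ring
    have hS2e : S^2 = ∑ m ∈ range p, ∑ n ∈ range p,
        Real.cos (((p:ℝ) - 1 - 2 * m) * u) * Real.cos (((p:ℝ) - 1 - 2 * n) * u) := by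
      rw [hSdef, sq, Finset.sum_mul_sum]
    have heq : (p:ℝ)^2 - S^2 = ∑ m ∈ range p, ∑ n ∈ range p,
        (1 - Real.cos (((p:ℝ) - 1 - 2 * m) * u) * Real.cos (((p:ℝ) - 1 - 2 * n) * u)) := by
      rw [hp2, hS2e, ← Finset.sum_sub_distrib]
      apply Finset.sum_congr rfl
      intro m _; rw [← Finset.sum_sub_distrib]
    rw [heq]
    have hterm : ∀ m ∈ range p, ∑ n ∈ range p, (1:ℝ)
          - ∑ n ∈ range p, Real.cos (((p:ℝ) - 1 - 2 * m) * u) * Real.cos (((p:ℝ) - 1 - 2 * n) * u)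
        = ∑ n ∈ range p, (1 - Real.cos (((p:ℝ) - 1 - 2 * m) * u) * Real.cos (((p:ℝ) - 1 - 2 * n) * u)) := by
      intro m _; rw [← Finset.sum_sub_distrib]
    have hbound : ∀ m ∈ range p, ∀ n ∈ range p,
        1 - Real.cos (((p:ℝ) - 1 - 2 * m) * u) * Real.cos (((p:ℝ) - 1 - 2 * n) * u)
          ≤ ((((p:ℝ) - 1 - m - n)^2 + ((n:ℝ) - m)^2)) * Real.sin u ^ 2 := by
      intro m _ n _
      have hr : ((p:ℝ) - 1 - 2*m) = ((p:ℝ) - 1 - m - n) + ((n:ℝ) - m) := by ring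
      have hs : ((p:ℝ) - 1 - 2*n) = ((p:ℝ) - 1 - m - n) - ((n:ℝ) - m) := by ring
      rw [hr, hs, cos_prod_identity]
      have b1 : Real.sin (((p:ℝ) - 1 - m - n) * u) ^ 2 ≤ ((p:ℝ) - 1 - m - n)^2 * Real.sin u ^ 2 := by
        have := sin_int_sq_le ((p:ℤ) - 1 - m - n) u
        push_cast at this
        convert this using 3 <;> push_cast <;> ring
      have b2 : Real.sin (((n:ℝ) - m) * u) ^ 2 ≤ ((n:ℝ) - m)^2 * Real.sin u ^ 2 := by
        have := sin_int_sq_le ((n:ℤ) - m) u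
        push_cast at this
        convert this using 3 <;> push_cast <;> ring
      nlinarith [b1, b2]
    calc ∑ m ∈ range p, ∑ n ∈ range p,
          (1 - Real.cos (((p:ℝ) - 1 - 2 * m) * u) * Real.cos (((p:ℝ) - 1 - 2 * n) * u))
        ≤ ∑ m ∈ range p, ∑ n ∈ range p,
            ((((p:ℝ) - 1 - m - n)^2 + ((n:ℝ) - m)^2)) * Real.sin u ^ 2 := by
          apply Finset.sum_le_sum
          intro m hm
          exact Finset.sum_le_sum (fun n hn => hbound m hm n hn)
      _ = (∑ m ∈ range p, ∑ n ∈ range p, (((p:ℝ) - 1 - m - n)^2 + ((n:ℝ) - m)^2)) * Real.sin u ^ 2 := by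
          rw [Finset.sum_mul]
          exact Finset.sum_congr rfl (fun m _ => by rw [Finset.sum_mul])
      _ = (p:ℝ)^2 * ((p:ℝ)^2 - 1) / 3 * Real.sin u ^ 2 := by rw [Tsum]
  constructor
  · rw [hS]
    nlinarith [sq_nonneg (Real.sin u), hS2]
  · rw [hS]
    nlinarith [sq_nonneg (Real.sin u), mul_le_mul_of_nonneg_left hdiff (sq_nonneg (Real.sin u))]

noncomputable def cLTS (p k : ℕ) : ℝ :=
  if k ≤ p then
    (-1:ℝ)^k * p * (Nat.factorial (p + k - 1)) /
      ((Nat.factorial (p - k)) * (Nat.factorial (2*k)))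
  else 0

lemma factorial_cast_ne (n : ℕ) : ((Nat.factorial n : ℝ)) ≠ 0 := by
  exact_mod_cast (Nat.factorial_pos n).ne'

lemma cLTS_zero (p : ℕ) (hp : 1 ≤ p) : cLTS p 0 = 1 := by
  rw [cLTS, if_pos (Nat.zero_le p)]
  have h : p + 0 - 1 = p - 1 := by omega
  have h2 : p - 0 = p := by omega
  rw [h, h2]
  have h3 : (Nat.factorial p : ℝ) = p * Nat.factorial (p-1) := by
    rw [← Nat.mul_factorial_pred (by omega : p ≠ 0)]; push_cast; ring
  rw [h3]
  simp [Nat.factorial]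
  exact ⟨by omega, Nat.factorial_ne_zero _⟩

lemma cLTS_one (p : ℕ) (hp : 1 ≤ p) : cLTS p 1 = -((p:ℝ)^2/2) := by
  rw [cLTS, if_pos hp]
  have h : p + 1 - 1 = p := by omega
  rw [h]
  have h3 : (Nat.factorial p : ℝ) = p * Nat.factorial (p-1) := by
    rw [← Nat.mul_factorial_pred (by omega : p ≠ 0)]; push_cast; ring
  rw [h3]
  have : (Nat.factorial (2*1) : ℝ) = 2 := by norm_num [Nat.factorial]
  rw [this]
  have hne := factorial_cast_ne (p-1)
  field_simp

lemma crec (p k : ℕ) (hp : 2 ≤ p) :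
    cLTS (p+1) k = 2 * cLTS p k - (if k = 0 then 0 else cLTS p (k-1)) - cLTS (p-1) k := by
  rcases Nat.eq_zero_or_pos k with rfl | hk
  · rw [if_pos rfl, cLTS_zero (p+1) (by omega), cLTS_zero p (by omega),
      cLTS_zero (p-1) (by omega)]
    ring
  obtain ⟨k', rfl⟩ : ∃ k', k = k' + 1 := ⟨k - 1, by omega⟩
  rw [if_neg (by omega)]
  simp only [Nat.add_sub_cancel]
  by_cases hmain : k' + 2 ≤ p
  · -- main case 1 ≤ k ≤ p - 1
    obtain ⟨d, rfl⟩ : ∃ d, p = k' + d + 2 := ⟨p - k' - 2, by omega⟩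
    rw [cLTS, cLTS, cLTS, cLTS,
      if_pos (by omega : k' + 1 ≤ k' + d + 2 + 1),
      if_pos (by omega : k' + 1 ≤ k' + d + 2),
      if_pos (by omega : k' ≤ k' + d + 2),
      if_pos (by omega : k' + 1 ≤ k' + d + 2 - 1)]
    have i1 : k' + d + 2 + 1 + (k' + 1) - 1 = 2*k' + d + 3 := by omega
    have i2 : k' + d + 2 + (k' + 1) - 1 = 2*k' + d + 2 := by omega
    have i3 : k' + d + 2 + k' - 1 = 2*k' + d + 1 := by omega
    have i4 : k' + d + 2 - 1 + (k' + 1) - 1 = 2*k' + d + 1 := by omega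
    have i5 : k' + d + 2 + 1 - (k' + 1) = d + 2 := by omega
    have i6 : k' + d + 2 - (k' + 1) = d + 1 := by omega
    have i7 : k' + d + 2 - k' = d + 2 := by omega
    have i8 : k' + d + 2 - 1 - (k' + 1) = d := by omega
    have i9 : k' + d + 2 - 1 = k' + d + 1 := by omega
    rw [i1, i2, i3, i4, i5, i6, i7, i8, i9]
    -- factorial expansions
    have f1 : Nat.factorial (2*k'+d+3) = (2*k'+d+3) * ((2*k'+d+2) * Nat.factorial (2*k'+d+1)) := by
      rw [show 2*k'+d+3 = (2*k'+d+2)+1 by omega, Nat.factorial_succ,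
        show 2*k'+d+2 = (2*k'+d+1)+1 by omega, Nat.factorial_succ]
    have f2 : Nat.factorial (2*k'+d+2) = (2*k'+d+2) * Nat.factorial (2*k'+d+1) := by
      rw [show 2*k'+d+2 = (2*k'+d+1)+1 by omega, Nat.factorial_succ]
    have f3 : Nat.factorial (d+2) = (d+2) * ((d+1) * Nat.factorial d) := by
      rw [show d+2 = (d+1)+1 by omega, Nat.factorial_succ, Nat.factorial_succ]
    have f4 : Nat.factorial (d+1) = (d+1) * Nat.factorial d := Nat.factorial_succ d
    have f5 : Nat.factorial (2*(k'+1)) = (2*k'+2) * ((2*k'+1) * Nat.factorial (2*k')) := by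
      rw [show 2*(k'+1) = (2*k'+1)+1 by omega, Nat.factorial_succ,
        show 2*k'+1 = (2*k')+1 by omega, Nat.factorial_succ]
    rw [f1, f2, f3, f4, f5]
    have hA := factorial_cast_ne (2*k'+d+1)
    have hB := factorial_cast_ne d
    have hC := factorial_cast_ne (2*k')
    push_cast
    rw [pow_succ]
    field_simp
    ring
  · -- k = p or k = p+1 or k > p+1
    by_cases hkp : k' + 1 = p
    · -- k = p
      subst hkp
      rw [cLTS, cLTS, cLTS, cLTS,
        if_pos (by omega : k' + 1 ≤ k' + 1 + 1),
        if_pos (by omega : k' + 1 ≤ k' + 1),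
        if_pos (by omega : k' ≤ k' + 1),
        if_neg (by omega : ¬ (k' + 1 ≤ k' + 1 - 1))]
      have i1 : k' + 1 + 1 + (k' + 1) - 1 = 2*(k'+1) := by omega
      have i2 : k' + 1 + (k' + 1) - 1 = 2*k' + 1 := by omega
      have i3 : k' + 1 + k' - 1 = 2*k' := by omega
      have i5 : k' + 1 + 1 - (k' + 1) = 1 := by omega
      have i6 : k' + 1 - (k' + 1) = 0 := by omega
      have i7 : k' + 1 - k' = 1 := by omega
      rw [i1, i2, i3, i5, i6, i7]
      have f1 : Nat.factorial (2*(k'+1)) = (2*k'+2) * Nat.factorial (2*k'+1) := by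
        rw [show 2*(k'+1) = (2*k'+1)+1 by omega, Nat.factorial_succ]
      have f2 : Nat.factorial (2*k'+1) = (2*k'+1) * Nat.factorial (2*k') := by
        rw [show 2*k'+1 = (2*k')+1 by omega, Nat.factorial_succ]
      rw [f1, f2]
      have hC := factorial_cast_ne (2*k')
      have hD := factorial_cast_ne (2*k'+1)
      simp [Nat.factorial]
      push_cast
      rw [pow_succ]
      field_simp
      ring
    · by_cases hkp1 : k' + 1 = p + 1
      · -- k = p + 1
        have hk'p : k' = p := by omega
        subst hk'p
        rw [cLTS, cLTS, cLTS, cLTS,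
          if_pos (by omega : k' + 1 ≤ k' + 1),
          if_neg (by omega : ¬ (k' + 1 ≤ k')),
          if_pos (le_refl k'),
          if_neg (by omega : ¬ (k' + 1 ≤ k' - 1))]
        have i1 : k' + 1 + (k' + 1) - 1 = 2*k' + 1 := by omega
        have i3 : k' + k' - 1 = 2*k' - 1 := by omega
        have i5 : k' + 1 - (k' + 1) = 0 := by omega
        have i7 : k' - k' = 0 := by omega
        rw [i1, i3, i5, i7]
        have f1 : Nat.factorial (2*(k'+1)) = (2*k'+2) * ((2*k'+1) * Nat.factorial (2*k')) := by
          rw [show 2*(k'+1) = (2*k'+1)+1 by omega, Nat.factorial_succ,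
            show 2*k'+1 = (2*k')+1 by omega, Nat.factorial_succ]
        have f2 : Nat.factorial (2*k'+1) = (2*k'+1) * Nat.factorial (2*k') := by
          rw [show 2*k'+1 = (2*k')+1 by omega, Nat.factorial_succ]
        have f3 : Nat.factorial (2*k') = (2*k') * Nat.factorial (2*k'-1) := by
          rw [← Nat.mul_factorial_pred (by omega : 2*k' ≠ 0)]
        rw [f1, f2, f3]
        have hE := factorial_cast_ne (2*k'-1)
        simp [Nat.factorial]
        push_cast
        rw [pow_succ]
        field_simp
      · -- k > p + 1 : all zero
        rw [cLTS, cLTS, cLTS, cLTS,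
          if_neg (by omega : ¬ (k' + 1 ≤ p + 1)),
          if_neg (by omega : ¬ (k' + 1 ≤ p)),
          if_neg (by omega : ¬ (k' ≤ p)),
          if_neg (by omega : ¬ (k' + 1 ≤ p - 1))]
        ring

noncomputable def FLTS (p : ℕ) (x : ℝ) : ℝ := ∑ k ∈ range (p+1), cLTS p k * x^k

lemma cLTS_eq_zero {p k : ℕ} (h : p < k) : cLTS p k = 0 := by
  rw [cLTS, if_neg (by omega)]

lemma Frec (p : ℕ) (hp : 2 ≤ p) (x : ℝ) :
    FLTS (p+1) x = (2 - x) * FLTS p x - FLTS (p-1) x := by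
  have hFp : FLTS p x = ∑ k ∈ range (p+2), cLTS p k * x^k := by
    rw [FLTS, Finset.sum_range_succ (f := fun k => cLTS p k * x^k) (n := p+1),
      cLTS_eq_zero (by omega : p < p+1)]
    ring
  have hFpm : FLTS (p-1) x = ∑ k ∈ range (p+2), cLTS (p-1) k * x^k := by
    rw [FLTS, show p - 1 + 1 = p from by omega,
      Finset.sum_range_succ (f := fun k => cLTS (p-1) k * x^k) (n := p+1),
      Finset.sum_range_succ (f := fun k => cLTS (p-1) k * x^k) (n := p),
      cLTS_eq_zero (by omega : p - 1 < p+1), cLTS_eq_zero (by omega : p - 1 < p)]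
    ring
  have hxF : x * FLTS p x
      = ∑ k ∈ range (p+2), (if k = 0 then 0 else cLTS p (k-1)) * x^k := by
    rw [Finset.sum_range_succ' (f := fun k => (if k = 0 then 0 else cLTS p (k-1)) * x^k) (n := p+1)]
    simp only [Nat.succ_ne_zero, if_false, Nat.add_sub_cancel, eq_self_iff_true, if_true, zero_mul, add_zero]
    rw [FLTS, Finset.mul_sum]
    apply Finset.sum_congr rfl
    intro k _
    rw [pow_succ]
    ring
  have : FLTS (p+1) x = ∑ k ∈ range (p+2),
      (2 * (cLTS p k * x^k) - (if k = 0 then 0 else cLTS p (k-1)) * x^k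
        - cLTS (p-1) k * x^k) := by
    rw [FLTS]
    apply Finset.sum_congr rfl
    intro k _
    rw [crec p k hp]
    ring
  rw [this, Finset.sum_sub_distrib, Finset.sum_sub_distrib, ← Finset.mul_sum,
    ← hFp, ← hxF, ← hFpm]
  ring

lemma FLTS_one (x : ℝ) : FLTS 1 x = 1 - x/2 := by
  rw [FLTS]
  rw [Finset.sum_range_succ, Finset.sum_range_one, cLTS_zero 1 le_rfl, cLTS_one 1 le_rfl]
  push_cast
  ring

lemma FLTS_two (x : ℝ) : FLTS 2 x = 1 - 2*x + x^2/2 := by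
  rw [FLTS]
  rw [Finset.sum_range_succ, Finset.sum_range_succ, Finset.sum_range_one,
    cLTS_zero 2 (by omega), cLTS_one 2 (by omega)]
  have h22 : cLTS 2 2 = 1/2 := by
    rw [cLTS, if_pos le_rfl]
    norm_num [Nat.factorial]
  rw [h22]
  push_cast
  ring

lemma FLTS_cos (θ : ℝ) (p : ℕ) (hp : 1 ≤ p) :
    FLTS p (2 - 2*Real.cos θ) = Real.cos (p * θ) := by
  have aux : ∀ n : ℕ, FLTS (n+1) (2 - 2*Real.cos θ) = Real.cos ((n+1 : ℕ) * θ) ∧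
      FLTS (n+2) (2 - 2*Real.cos θ) = Real.cos ((n+2 : ℕ) * θ) := by
    intro n
    induction n with
    | zero =>
      constructor
      · rw [FLTS_one]; push_cast; ring_nf
      · rw [FLTS_two]
        have : ((2:ℕ) : ℝ) * θ = 2 * θ := by push_cast; ring
        rw [this, Real.cos_two_mul]
        ring
    | succ n ih =>
      refine ⟨ih.2, ?_⟩
      have hrec := Frec (n+2) (by omega) (2 - 2*Real.cos θ)
      have hs : n + 2 - 1 = n + 1 := by omega
      rw [hs, ih.1, ih.2] at hrec
      rw [show n + 1 + 2 = n + 2 + 1 from by omega, hrec]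
      have e1 : ((n+3 : ℕ) : ℝ) * θ = ((n+2 : ℕ) : ℝ) * θ + θ := by push_cast; ring
      have e2 : ((n+1 : ℕ) : ℝ) * θ = ((n+2 : ℕ) : ℝ) * θ - θ := by push_cast; ring
      rw [show n + 2 + 1 = n + 3 from by omega, e1, e2, Real.cos_add, Real.cos_sub]
      ring
  obtain ⟨n, rfl⟩ : ∃ n, p = n + 1 := ⟨p - 1, by omega⟩
  exact (aux n).1

lemma alpha_eq_c (p j : ℕ) (h : j + 1 ≤ p) : alphaLTS p j = cLTS p (j+1) := by
  rw [cLTS, if_pos h, alphaLTS]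
  have e1 : p + (j+1) - 1 = p + j := by omega
  have e2 : p - (j+1) = p - j - 1 := by omega
  have e3 : 2*(j+1) = 2*j+2 := by omega
  rw [e1, e2, e3]

lemma sum_alpha_eq (p : ℕ) (hp : 2 ≤ p) (x : ℝ) :
    ∑ j ∈ Finset.Icc 1 (p-1), alphaLTS p j * x^(j+1)
      = FLTS p x - 1 + (p:ℝ)^2/2 * x := by
  have hsplit : FLTS p x = (cLTS p 0 * x^0 + cLTS p 1 * x^1)
      + ∑ k ∈ Finset.Ico 2 (p+1), cLTS p k * x^k := by
    rw [FLTS, Finset.range_eq_Ico,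
      ← Finset.sum_Ico_consecutive (fun k => cLTS p k * x^k)
        (by omega : 0 ≤ 2) (by omega : 2 ≤ p+1)]
    congr 1
    rw [← Finset.range_eq_Ico, Finset.sum_range_succ, Finset.sum_range_one]
  have hIcc : Finset.Icc 1 (p-1) = Finset.Ico 1 p := by
    rw [← Finset.Ico_add_one_right_eq_Icc]
    congr 1
    omega
  have hre : ∑ j ∈ Finset.Icc 1 (p-1), alphaLTS p j * x^(j+1)
      = ∑ k ∈ Finset.Ico 2 (p+1), cLTS p k * x^k := by
    rw [hIcc, Finset.sum_Ico_eq_sum_range, Finset.sum_Ico_eq_sum_range]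
    rw [show p - 1 = p + 1 - 2 from by omega]
    apply Finset.sum_congr rfl
    intro i hi
    simp only [Finset.mem_range] at hi
    rw [alpha_eq_c p (1+i) (by omega)]
    rw [show 1 + i + 1 = 2 + i from by omega]
  rw [hre, hsplit, cLTS_zero p (by omega), cLTS_one p (by omega)]
  ring

theorem alphaLTS_sum_bound' (p : ℕ) (hp : 2 ≤ p) (κ : ℝ)
    (hκ : κ ∈ Set.Ioc (0 : ℝ) (4 * (p : ℝ) ^ 2)) :
    |2 / (p : ℝ) ^ 2 *
        ∑ j ∈ Finset.Icc 1 (p - 1), alphaLTS p j * (κ / (p : ℝ) ^ 2) ^ (j - 1)| ≤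
      ((p : ℝ) ^ 2 - 1) / 12 := by
  obtain ⟨hκ0, hκ4⟩ := hκ
  have hppos : (0:ℝ) < (p:ℝ)^2 := by
    have : (0:ℝ) < (p:ℝ) := by exact_mod_cast (by omega : 0 < p)
    positivity
  set x : ℝ := κ / (p:ℝ)^2 with hxdef
  have hx0 : 0 < x := div_pos hκ0 hppos
  have hx4 : x ≤ 4 := by
    rw [hxdef, div_le_iff₀ hppos]; linarith
  set θ : ℝ := Real.arccos (1 - x/2) with hθdef
  have hθcos : Real.cos θ = 1 - x/2 :=
    Real.cos_arccos (by linarith) (by linarith)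
  have hxθ : x = 2 - 2*Real.cos θ := by rw [hθcos]; ring
  have hF : FLTS p x = Real.cos ((p:ℝ) * θ) := by
    rw [hxθ]; exact FLTS_cos θ p (by omega)
  set u : ℝ := θ/2 with hudef
  have hcosθ : Real.cos θ = 1 - 2*Real.sin u^2 := by
    rw [show θ = 2*u from by rw [hudef]; ring, Real.cos_two_mul, Real.cos_sq']
    ring
  have hcospθ : Real.cos ((p:ℝ)*θ) = 1 - 2*Real.sin ((p:ℝ)*u)^2 := by
    rw [show (p:ℝ)*θ = 2*((p:ℝ)*u) from by rw [hudef]; ring, Real.cos_two_mul, Real.cos_sq']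
    ring
  have hxs : x = 4 * Real.sin u^2 := by
    rw [hxθ, hcosθ]; ring
  obtain ⟨hk0, hkle⟩ := key_sin_bound p u
  set N : ℝ := FLTS p x - 1 + (p:ℝ)^2/2 * x with hNdef
  have hNeq : N = 2 * ((p:ℝ)^2 * Real.sin u^2 - Real.sin ((p:ℝ)*u)^2) := by
    rw [hNdef, hF, hcospθ, hxs]; ring
  have hN0 : 0 ≤ N := by rw [hNeq]; linarith
  have hNle : N ≤ (p:ℝ)^2*((p:ℝ)^2-1)/24 * x^2 := by
    rw [hNeq, hxs]
    have : (4 * Real.sin u^2)^2 = 16 * Real.sin u^4 := by ring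
    rw [this]
    nlinarith [hkle]
  set S : ℝ := ∑ j ∈ Finset.Icc 1 (p - 1), alphaLTS p j * x ^ (j - 1) with hSdef
  have hSx : S * x^2 = N := by
    rw [hSdef, Finset.sum_mul]
    rw [hNdef, ← sum_alpha_eq p hp x]
    apply Finset.sum_congr rfl
    intro j hj
    simp only [Finset.mem_Icc] at hj
    rw [mul_assoc, ← pow_add, show j - 1 + 2 = j + 1 from by omega]
  have hx2 : (0:ℝ) < x^2 := by positivity
  have hSeq : S = N / x^2 := by
    rw [← hSx]; field_simp
  have hS0 : 0 ≤ S := by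
    rw [hSeq]; positivity
  rw [abs_of_nonneg (by positivity : (0:ℝ) ≤ 2 / (p:ℝ)^2 * S)]
  rw [hSeq]
  rw [div_mul_div_comm, div_le_div_iff₀ (by positivity) (by norm_num : (0:ℝ) < 12)]
  calc 2 * N * 12 ≤ 2 * ((p:ℝ)^2*((p:ℝ)^2-1)/24 * x^2) * 12 := by nlinarith [hNle]
    _ = ((p:ℝ)^2 - 1) * ((p:ℝ)^2 * x^2) := by ring
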